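/- In the qubit family above, the dephasing (pinching) map ℒ in the computational basis preserves the SLD quantum Fisher information: letting σ_θ = ℒ(ρ_θ) = diag(p(θ), 1−p(θ)), the operator L_θ is also the SLD of σ_θ, and tr(L_θ² σ_θ) = tr(L_θ² ρ_θ); yet the RLD Fisher information strictly decreases: tr(σ_θ^{-1} σ̇_θ²) < tr(ρ_θ^{-1} ρ̇_θ* ρ̇_θ) whenever ε ≠ 0 and ṗ(θ) ≠ 0. -/

import Mathlib

open scoped Matrix ComplexOrder

/-- `r(θ) = exp ∫_a^θ ṗ(s)(1−2p(s))/(2p(s)(1−p(s))) ds`, with `p'` the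
derivative of `p`. -/
noncomputable def rFun (a : ℝ) (p p' : ℝ → ℝ) (θ : ℝ) : ℝ :=
  Real.exp (∫ s in a..θ, p' s * (1 - 2 * p s) / (2 * p s * (1 - p s)))

/-- The derivative `ṙ(θ) = r(θ)·ṗ(θ)(1−2p(θ))/(2p(θ)(1−p(θ)))`. -/
noncomputable def rDot (a : ℝ) (p p' : ℝ → ℝ) (θ : ℝ) : ℝ :=
  rFun a p p' θ * (p' θ * (1 - 2 * p θ) / (2 * p θ * (1 - p θ)))

/-- The qubit family `ρ_θ = [[p(θ), ε r(θ)],[ε r(θ), 1−p(θ)]]`. -/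
noncomputable def rhoFam (a : ℝ) (p p' : ℝ → ℝ) (ε : ℝ) (θ : ℝ) :
    Matrix (Fin 2) (Fin 2) ℂ :=
  !![(p θ : ℂ), ((ε * rFun a p p' θ : ℝ) : ℂ);
     ((ε * rFun a p p' θ : ℝ) : ℂ), ((1 - p θ : ℝ) : ℂ)]

/-- The entrywise derivative `ρ̇_θ`. -/
noncomputable def rhoDot (a : ℝ) (p p' : ℝ → ℝ) (ε : ℝ) (θ : ℝ) :
    Matrix (Fin 2) (Fin 2) ℂ :=
  !![(p' θ : ℂ), ((ε * rDot a p p' θ : ℝ) : ℂ);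
     ((ε * rDot a p p' θ : ℝ) : ℂ), ((-p' θ : ℝ) : ℂ)]

/-- The dephased family `σ_θ = ℒ(ρ_θ) = diag(p(θ), 1−p(θ))`. -/
noncomputable def sigmaFam (p : ℝ → ℝ) (θ : ℝ) : Matrix (Fin 2) (Fin 2) ℂ :=
  Matrix.diagonal ![(p θ : ℂ), ((1 - p θ : ℝ) : ℂ)]

/-- Its entrywise derivative `σ̇_θ = diag(ṗ(θ), −ṗ(θ))`. -/
noncomputable def sigmaDot (p' : ℝ → ℝ) (θ : ℝ) : Matrix (Fin 2) (Fin 2) ℂ :=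
  Matrix.diagonal ![(p' θ : ℂ), ((-p' θ : ℝ) : ℂ)]

/-- The diagonal operator `L_θ = diag(ṗ(θ)/p(θ), −ṗ(θ)/(1−p(θ)))`. -/
noncomputable def LFam (p p' : ℝ → ℝ) (θ : ℝ) : Matrix (Fin 2) (Fin 2) ℂ :=
  Matrix.diagonal ![((p' θ / p θ : ℝ) : ℂ), ((-(p' θ / (1 - p θ)) : ℝ) : ℂ)]

lemma ofReal_hdwa {f : ℝ → ℝ} {f' x : ℝ} {s : Set ℝ} (h : HasDerivWithinAt f f' s x) :
    HasDerivWithinAt (fun t => ((f t : ℝ) : ℂ)) ((f' : ℝ) : ℂ) s x := by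
  simpa [Function.comp_def] using Complex.ofRealCLM.hasFDerivAt.comp_hasDerivWithinAt x h

lemma rFun_hdwa (a b : ℝ) (p p' : ℝ → ℝ)
    (hp : ∀ θ ∈ Set.Icc a b, 0 < p θ ∧ p θ < 1)
    (hderiv : ∀ θ ∈ Set.Icc a b, HasDerivWithinAt p (p' θ) (Set.Icc a b) θ)
    (hp'cont : ContinuousOn p' (Set.Icc a b))
    (θ : ℝ) (hθ : θ ∈ Set.Icc a b) :
    HasDerivWithinAt (rFun a p p') (rDot a p p' θ) (Set.Icc a b) θ := by
  haveI : Fact (θ ∈ Set.Icc a b) := ⟨hθ⟩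
  set g : ℝ → ℝ := fun s => p' s * (1 - 2 * p s) / (2 * p s * (1 - p s)) with hg
  have hpc : ContinuousOn p (Set.Icc a b) := fun t ht => (hderiv t ht).continuousWithinAt
  have hgc : ContinuousOn g (Set.Icc a b) := by
    apply (hp'cont.mul ((continuousOn_const.sub (continuousOn_const.mul hpc)))).div
      ((continuousOn_const.mul hpc).mul (continuousOn_const.sub hpc))
    intro t ht
    have h1 := (hp t ht).1
    have h2 : (0:ℝ) < 1 - p t := by linarith [(hp t ht).2]
    show 2 * p t * (1 - p t) ≠ 0
    exact mul_ne_zero (mul_ne_zero two_ne_zero h1.ne') h2.ne'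
  have hInt : HasDerivWithinAt (fun t => ∫ s in a..t, g s) (g θ) (Set.Icc a b) θ := by
    apply intervalIntegral.integral_hasDerivWithinAt_right (t := Set.Icc a b)
    · apply ContinuousOn.intervalIntegrable
      apply hgc.mono
      rw [Set.uIcc_of_le hθ.1]
      exact Set.Icc_subset_Icc le_rfl hθ.2
    · exact hgc.stronglyMeasurableAtFilter_nhdsWithin measurableSet_Icc θ
    · exact hgc θ hθ
  have h2 := (Real.hasDerivAt_exp (∫ s in a..θ, g s)).comp_hasDerivWithinAt θ hInt
  simp only [Function.comp_def] at h2
  unfold rDot rFun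
  convert h2 using 2

/-- in the qubit family above (with `ε ≠ 0`), the dephasing map
`ℒ` in the computational basis preserves the SLD quantum Fisher information:
`σ_θ = ℒ(ρ_θ)` has entrywise derivative `σ̇_θ`, `L_θ` is also the SLD of `σ_θ`,
and `tr(L_θ² σ_θ) = tr(L_θ² ρ_θ)`; yet the RLD Fisher information strictly
decreases: `tr(σ_θ⁻¹ σ̇_θ²) < tr(ρ_θ⁻¹ ρ̇_θᴴ ρ̇_θ)`. -/
theorem stmt14 (a b : ℝ) (hab : a < b) (p p' : ℝ → ℝ) (ε : ℝ)
    (hp : ∀ θ ∈ Set.Icc a b, 0 < p θ ∧ p θ < 1)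
    (hderiv : ∀ θ ∈ Set.Icc a b, HasDerivWithinAt p (p' θ) (Set.Icc a b) θ)
    (hp'cont : ContinuousOn p' (Set.Icc a b))
    (hp'ne : ∀ θ ∈ Set.Icc a b, p' θ ≠ 0)
    (hε : ε ≠ 0)
    (hεlt : ∀ θ ∈ Set.Icc a b, ε ^ 2 < p θ * (1 - p θ) / (rFun a p p' θ) ^ 2) :
    ∀ θ ∈ Set.Icc a b,
      (∀ i j, HasDerivWithinAt (fun t => rhoFam a p p' ε t i j)
        (rhoDot a p p' ε θ i j) (Set.Icc a b) θ) ∧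
      (∀ i j, HasDerivWithinAt (fun t => sigmaFam p t i j)
        (sigmaDot p' θ i j) (Set.Icc a b) θ) ∧
      sigmaDot p' θ =
        (1 / 2 : ℂ) • (sigmaFam p θ * LFam p p' θ + LFam p p' θ * sigmaFam p θ) ∧
      Matrix.trace (LFam p p' θ * LFam p p' θ * sigmaFam p θ)
        = Matrix.trace (LFam p p' θ * LFam p p' θ * rhoFam a p p' ε θ) ∧
      (Matrix.trace ((sigmaFam p θ)⁻¹ * sigmaDot p' θ * sigmaDot p' θ)).re
        < (Matrix.trace ((rhoFam a p p' ε θ)⁻¹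
            * (rhoDot a p p' ε θ)ᴴ * rhoDot a p p' ε θ)).re := by
  intro θ hθ
  obtain ⟨hP, hP1⟩ := hp θ hθ
  have hQ : (0:ℝ) < 1 - p θ := by linarith
  have hD := hp'ne θ hθ
  have hr := rFun_hdwa a b p p' hp hderiv hp'cont θ hθ
  have hpd := hderiv θ hθ
  set P := p θ
  set Q : ℝ := 1 - p θ with hQdef
  set D := p' θ
  set R := rFun a p p' θ
  have hR : (0:ℝ) < R := Real.exp_pos _
  have hC2 : ε ^ 2 * R ^ 2 < P * Q := by
    have := hεlt θ hθ
    rw [lt_div_iff₀ (by positivity)] at this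
    show ε ^ 2 * rFun a p p' θ ^ 2 < p θ * (1 - p θ)
    linarith
  refine ⟨?_, ?_, ?_, ?_, ?_⟩
  · intro i j
    fin_cases i <;> fin_cases j <;>
      simp only [rhoFam, rhoDot, Matrix.cons_val', Matrix.cons_val_zero, Matrix.cons_val_one,
        Matrix.head_cons, Matrix.empty_val', Matrix.cons_val_fin_one, Matrix.head_fin_const,
        Fin.zero_eta, Fin.mk_one, Fin.isValue]
    · exact ofReal_hdwa hpd
    · exact ofReal_hdwa ((hr.const_mul ε))
    · exact ofReal_hdwa ((hr.const_mul ε))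
    · exact ofReal_hdwa ((hpd.const_sub 1).congr_deriv (by ring))
  · intro i j
    fin_cases i <;> fin_cases j <;>
      simp only [sigmaFam, sigmaDot, Matrix.diagonal_apply_eq, Matrix.diagonal_apply_ne,
        Fin.zero_eta, Fin.mk_one, Fin.isValue, ne_eq, Matrix.cons_val_zero, Matrix.cons_val_one,
        Matrix.head_cons, Matrix.diagonal, Matrix.of_apply, Fin.one_eq_zero_iff,
        Fin.zero_eq_one_iff]
    · exact ofReal_hdwa hpd
    · simpa using hasDerivWithinAt_const θ (Set.Icc a b) (0:ℂ)
    · simpa using hasDerivWithinAt_const θ (Set.Icc a b) (0:ℂ)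
    · exact ofReal_hdwa ((hpd.const_sub 1).congr_deriv (by ring))
  · have hPc : ((p θ : ℝ):ℂ) ≠ 0 := by exact_mod_cast hP.ne'
    have hQc : ((1:ℂ) - ((p θ : ℝ):ℂ)) ≠ 0 := by
      have : ((1 - p θ : ℝ):ℂ) ≠ 0 := by exact_mod_cast hQ.ne'
      push_cast at this
      exact this
    ext i j
    fin_cases i <;> fin_cases j <;>
      simp [sigmaDot, sigmaFam, LFam, Matrix.mul_apply, Fin.sum_univ_two, Matrix.diagonal,
        Matrix.of_apply] <;>
      push_cast <;> field_simp <;> ring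
  · simp [LFam, sigmaFam, rhoFam, Matrix.trace_fin_two, Matrix.mul_apply, Fin.sum_univ_two,
      Matrix.diagonal]
  · have hdet : (0:ℝ) < p θ * (1 - p θ) - (ε * rFun a p p' θ) ^ 2 := by nlinarith
    have hdetσ : (0:ℝ) < p θ * (1 - p θ) := by nlinarith
    have hdc : ((p θ * (1 - p θ) - (ε * rFun a p p' θ) ^ 2 : ℝ) : ℂ) ≠ 0 := by
      exact_mod_cast hdet.ne'
    have hdc' := hdc
    push_cast at hdc'
    have hPc : ((p θ : ℝ) : ℂ) ≠ 0 := by exact_mod_cast hP.ne'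
    have hQc : ((1:ℂ) - ((p θ : ℝ):ℂ)) ≠ 0 := by
      have : ((1 - p θ : ℝ):ℂ) ≠ 0 := by exact_mod_cast hQ.ne'
      push_cast at this
      exact this
    have hrho_inv : (rhoFam a p p' ε θ)⁻¹ =
        (((p θ * (1 - p θ) - (ε * rFun a p p' θ) ^ 2 : ℝ) : ℂ))⁻¹ •
          !![((1 - p θ : ℝ):ℂ), ((-(ε * rFun a p p' θ) : ℝ):ℂ);
             ((-(ε * rFun a p p' θ) : ℝ):ℂ), ((p θ : ℝ):ℂ)] := by
      apply Matrix.inv_eq_right_inv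
      have hmul : rhoFam a p p' ε θ *
          !![((1 - p θ : ℝ):ℂ), ((-(ε * rFun a p p' θ) : ℝ):ℂ);
             ((-(ε * rFun a p p' θ) : ℝ):ℂ), ((p θ : ℝ):ℂ)]
          = ((p θ * (1 - p θ) - (ε * rFun a p p' θ) ^ 2 : ℝ) : ℂ) • 1 := by
        ext i j
        fin_cases i <;> fin_cases j <;>
          simp [rhoFam, Matrix.mul_apply, Fin.sum_univ_two, Matrix.one_apply,
            Matrix.smul_apply, smul_eq_mul] <;>
          push_cast <;> ring
      rw [Matrix.mul_smul, hmul, smul_smul, inv_mul_cancel₀ hdc, one_smul]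
    have hσ_inv : (sigmaFam p θ)⁻¹ =
        Matrix.diagonal ![((((p θ)⁻¹ : ℝ)):ℂ), ((((1 - p θ)⁻¹ : ℝ)):ℂ)] := by
      apply Matrix.inv_eq_right_inv
      ext i j
      fin_cases i <;> fin_cases j <;>
        simp [sigmaFam, Matrix.mul_apply, Fin.sum_univ_two, Matrix.one_apply,
          Matrix.diagonal, Complex.ofReal_inv] <;>
        push_cast <;> field_simp
    have hLHS : Matrix.trace ((sigmaFam p θ)⁻¹ * sigmaDot p' θ * sigmaDot p' θ)
        = (((p' θ) ^ 2 / (p θ * (1 - p θ)) : ℝ) : ℂ) := by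
      rw [hσ_inv]
      simp [sigmaDot, Matrix.trace_fin_two, Matrix.mul_apply, Fin.sum_univ_two,
        Matrix.diagonal]
      push_cast
      field_simp
      ring
    have hRHS : Matrix.trace ((rhoFam a p p' ε θ)⁻¹
          * (rhoDot a p p' ε θ)ᴴ * rhoDot a p p' ε θ)
        = ((((p' θ) ^ 2 + (ε * rDot a p p' θ) ^ 2)
            / (p θ * (1 - p θ) - (ε * rFun a p p' θ) ^ 2) : ℝ) : ℂ) := by
      rw [hrho_inv, Matrix.smul_mul, Matrix.smul_mul, Matrix.trace_smul, smul_eq_mul]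
      simp [rhoDot, Matrix.trace_fin_two, Matrix.mul_apply, Fin.sum_univ_two,
        Matrix.vecMul, dotProduct, Matrix.conjTranspose_apply, Complex.conj_ofReal]
      push_cast
      field_simp
      ring
    rw [hLHS, hRHS, Complex.ofReal_re, Complex.ofReal_re]
    rw [div_lt_div_iff₀ hdetσ hdet]
    have key : (0:ℝ) < (p' θ) ^ 2 * (ε * rFun a p p' θ) ^ 2 := by positivity
    nlinarith [sq_nonneg (ε * rDot a p p' θ), hdetσ.le,
      mul_nonneg (sq_nonneg (ε * rDot a p p' θ)) hdetσ.le]
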